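/- Let (Ω, F, P) be a probability space with a measure-preserving map τ, and let E be a τ-invariant event. Suppose that for every ε > 0 there exist an event E' and constants C(E'), such that P(E Δ E') < ε and |P(E' ∩ τ^h E') − P(E')²| ≤ C(E')/h² for all h ≥ 1. Then P(E) ∈ {0, 1}. -/
import Mathlib


open MeasureTheory

lemma subset_union_symmDiff (A B : Set Ω) : A ⊆ B ∪ symmDiff A B := by
  intro x hx
  by_cases hb : x ∈ B
  · exact Or.inl hb
  · exact Or.inr (Or.inl ⟨hx, hb⟩)

lemma abs_toReal_measure_sub_le {Ω : Type*} [MeasurableSpace Ω] (μ : Measure Ω)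
    [IsFiniteMeasure μ] (A B : Set Ω) :
    |(μ A).toReal - (μ B).toReal| ≤ (μ (symmDiff A B)).toReal := by
  rw [abs_sub_le_iff]
  constructor
  · have h1 : μ A ≤ μ B + μ (symmDiff A B) :=
      le_trans (measure_mono (subset_union_symmDiff A B)) (measure_union_le _ _)
    have h2 : (μ A).toReal ≤ (μ B + μ (symmDiff A B)).toReal :=
      ENNReal.toReal_mono (by finiteness) h1
    rw [ENNReal.toReal_add (by finiteness) (by finiteness)] at h2
    linarith
  · have h1 : μ B ≤ μ A + μ (symmDiff A B) := by
      refine le_trans (measure_mono ?_) (measure_union_le _ _)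
      have := subset_union_symmDiff B A
      rwa [symmDiff_comm] at this
    have h2 : (μ B).toReal ≤ (μ A + μ (symmDiff A B)).toReal :=
      ENNReal.toReal_mono (by finiteness) h1
    rw [ENNReal.toReal_add (by finiteness) (by finiteness)] at h2
    linarith

lemma symmDiff_inter_subset (A A' B B' : Set Ω) :
    symmDiff (A ∩ B) (A' ∩ B') ⊆ symmDiff A A' ∪ symmDiff B B' := by
  intro x hx
  simp only [Set.mem_union, symmDiff_def, Set.sup_eq_union, Set.mem_union,
    Set.mem_diff, Set.mem_inter_iff] at hx ⊢
  tauto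

/-- Abstract ergodicity criterion: if an invariant event `E` can be approximated
arbitrarily well by events `E'` whose correlations with their distant iterated
translates decay quadratically, then `P(E) ∈ {0, 1}`. -/
theorem invariant_event_zero_one {Ω : Type*} [MeasurableSpace Ω]
    (μ : Measure Ω) [IsProbabilityMeasure μ] (τ : Ω → Ω)
    (hτ : MeasurePreserving τ μ μ)
    (E : Set Ω) (hE : MeasurableSet E) (hinv : τ ⁻¹' E = E)
    (happrox : ∀ ε > 0, ∃ E' : Set Ω, MeasurableSet E' ∧
      μ (symmDiff E E') < ENNReal.ofReal ε ∧
      ∃ C : ℝ, ∀ h : ℕ, 1 ≤ h →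
        |(μ (E' ∩ (τ^[h]) ⁻¹' E')).toReal - ((μ E').toReal) ^ 2| ≤ C / h ^ 2) :
    μ E = 0 ∨ μ E = 1 := by
  set p : ℝ := (μ E).toReal with hp
  -- E is invariant under all iterates
  have hiter : ∀ h : ℕ, (τ^[h]) ⁻¹' E = E := by
    intro h
    induction h with
    | zero => simp
    | succ n ih =>
      rw [Function.iterate_succ, Set.preimage_comp, ih, hinv]
  -- key estimate: |p - p^2| ≤ 4 ε for all ε > 0
  have key : ∀ ε : ℝ, 0 < ε → |p - p ^ 2| ≤ 4 * ε := by
    intro ε hε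
    obtain ⟨E', hE', hsd, C, hC⟩ := happrox ε hε
    set d : ℝ := (μ (symmDiff E E')).toReal with hd
    have hdε : d ≤ ε := ENNReal.toReal_le_of_le_ofReal hε.le hsd.le
    have hd0 : 0 ≤ d := ENNReal.toReal_nonneg
    set q : ℝ := (μ E').toReal with hq
    have hpq : |p - q| ≤ d := abs_toReal_measure_sub_le μ E E'
    -- For each h ≥ 1, |p - μ(E' ∩ τ^{-h} E')| ≤ 2 d
    have hstep : ∀ h : ℕ, 1 ≤ h →
        |p - (μ (E' ∩ (τ^[h]) ⁻¹' E')).toReal| ≤ 2 * d := by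
      intro h hh
      have hmp : MeasurePreserving (τ^[h]) μ μ := hτ.iterate h
      have hEh : E = E ∩ (τ^[h]) ⁻¹' E := by rw [hiter h, Set.inter_self]
      have habs : |p - (μ (E' ∩ (τ^[h]) ⁻¹' E')).toReal|
          ≤ (μ (symmDiff E (E' ∩ (τ^[h]) ⁻¹' E'))).toReal :=
        abs_toReal_measure_sub_le μ E (E' ∩ (τ^[h]) ⁻¹' E')
      refine habs.trans ?_
      have hsub : symmDiff E (E' ∩ (τ^[h]) ⁻¹' E')
          ⊆ symmDiff E E' ∪ (τ^[h]) ⁻¹' (symmDiff E E') := by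
        nth_rewrite 1 [hEh]
        have h1 := symmDiff_inter_subset E E' ((τ^[h]) ⁻¹' E) ((τ^[h]) ⁻¹' E')
        have h2 : symmDiff ((τ^[h]) ⁻¹' E) ((τ^[h]) ⁻¹' E')
            = (τ^[h]) ⁻¹' (symmDiff E E') := by
          simp [symmDiff_def, Set.preimage_union, Set.preimage_diff]
        rwa [h2] at h1
      have hmeas : μ (symmDiff E (E' ∩ (τ^[h]) ⁻¹' E'))
          ≤ μ (symmDiff E E') + μ ((τ^[h]) ⁻¹' (symmDiff E E')) :=
        le_trans (measure_mono hsub) (measure_union_le _ _)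
      have hpre : μ ((τ^[h]) ⁻¹' (symmDiff E E')) = μ (symmDiff E E') :=
        hmp.measure_preimage ((hE.symmDiff hE').nullMeasurableSet)
      rw [hpre] at hmeas
      have := ENNReal.toReal_mono (by finiteness) hmeas
      rw [ENNReal.toReal_add (by finiteness) (by finiteness)] at this
      linarith
    -- pass to the limit h → ∞ to get |p - q^2| ≤ 2 d
    have hlim : |p - q ^ 2| ≤ 2 * d := by
      have hineq : ∀ h : ℕ, 1 ≤ h → |p - q ^ 2| ≤ 2 * d + C / h ^ 2 := by
        intro h hh
        calc |p - q ^ 2| ≤ |p - (μ (E' ∩ (τ^[h]) ⁻¹' E')).toReal|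
            + |(μ (E' ∩ (τ^[h]) ⁻¹' E')).toReal - q ^ 2| := abs_sub_le _ _ _
          _ ≤ 2 * d + C / h ^ 2 := add_le_add (hstep h hh) (hC h hh)
      have htend : Filter.Tendsto (fun h : ℕ => 2 * d + C / (h : ℝ) ^ 2)
          Filter.atTop (nhds (2 * d + 0)) := by
        refine Filter.Tendsto.add tendsto_const_nhds ?_
        exact Filter.Tendsto.div_atTop tendsto_const_nhds
          ((Filter.tendsto_pow_atTop two_ne_zero).comp (tendsto_natCast_atTop_atTop (R := ℝ)))
      rw [add_zero] at htend
      exact ge_of_tendsto htend (Filter.eventually_atTop.2 ⟨1, fun h hh => hineq h hh⟩)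
    -- combine
    have hp1 : p ≤ 1 := by
      rw [hp]; exact ENNReal.toReal_le_of_le_ofReal one_pos.le (by simpa using prob_le_one)
    have hq1 : q ≤ 1 := by
      rw [hq]; exact ENNReal.toReal_le_of_le_ofReal one_pos.le (by simpa using prob_le_one)
    have hp0 : 0 ≤ p := ENNReal.toReal_nonneg
    have hq0 : 0 ≤ q := ENNReal.toReal_nonneg
    have hsq : |q ^ 2 - p ^ 2| ≤ 2 * d := by
      have : |q ^ 2 - p ^ 2| = |q - p| * |q + p| := by
        rw [← abs_mul]; ring_nf
      rw [this]
      have h1 : |q - p| ≤ d := by rwa [abs_sub_comm] at hpq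
      have h2 : |q + p| ≤ 2 := by rw [abs_of_nonneg (by linarith)]; linarith
      calc |q - p| * |q + p| ≤ d * 2 :=
            mul_le_mul h1 h2 (abs_nonneg _) hd0
        _ = 2 * d := by ring
    calc |p - p ^ 2| ≤ |p - q ^ 2| + |q ^ 2 - p ^ 2| := abs_sub_le _ _ _
      _ ≤ 2 * d + 2 * d := add_le_add hlim hsq
      _ ≤ 4 * ε := by linarith
  -- conclude p = p^2
  have hpp : p = p ^ 2 := by
    by_contra hne
    have habs : 0 < |p - p ^ 2| := by
      rw [abs_pos]; intro h; exact hne (by linarith)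
    have := key (|p - p ^ 2| / 8) (by linarith)
    linarith
  have hfin : μ E ≠ ⊤ := by finiteness
  have hp0 : 0 ≤ p := ENNReal.toReal_nonneg
  have : p = 0 ∨ p = 1 := by
    have h0 : p * (p - 1) = 0 := by nlinarith
    rcases mul_eq_zero.mp h0 with h | h
    · exact Or.inl h
    · exact Or.inr (by linarith)
  rcases this with h | h
  · left
    rw [hp] at h
    exact (ENNReal.toReal_eq_zero_iff _).mp h |>.resolve_right hfin
  · right
    rw [hp] at h
    rwa [ENNReal.toReal_eq_one_iff] at h
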